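/- Let k be a non-negative integer such that ‖x*‖² = k for every optimal solution x* of BP. Then there exists ε > 0 such that for every optimal solution x* ⊕ y* ⊕ z* of BPD', the optimal diameter satisfies diam(BP) = 2(k − e^T z*). -/

import Mathlib

open Matrix Finset

def BinaryVec {n : ℕ} (x : Fin n → ℝ) : Prop := ∀ i, x i = 0 ∨ x i = 1

/-- Feasibility for BP: `Ax ≤ b`, `x ∈ {0,1}ⁿ`. -/
def FeasBP {n m : ℕ} (A : Matrix (Fin m) (Fin n) ℝ) (b : Fin m → ℝ)
    (x : Fin n → ℝ) : Prop :=
  BinaryVec x ∧ A.mulVec x ≤ b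

/-- Optimality for BP with objective `cᵀ x`. -/
def OptBP {n m : ℕ} (A : Matrix (Fin m) (Fin n) ℝ) (b : Fin m → ℝ)
    (c : Fin n → ℝ) (x : Fin n → ℝ) : Prop :=
  FeasBP A b x ∧ ∀ x', FeasBP A b x' → ∑ i, c i * x' i ≤ ∑ i, c i * x i

/-- Feasibility for BPD' (BPD without the constraint `-x - y - z ≤ -e`). -/
def FeasBPD' {n m : ℕ} (A : Matrix (Fin m) (Fin n) ℝ) (b : Fin m → ℝ)
    (x y z : Fin n → ℝ) : Prop :=
  BinaryVec x ∧ BinaryVec y ∧ BinaryVec z ∧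
  A.mulVec x ≤ b ∧ A.mulVec y ≤ b ∧
  (∀ i, x i + y i - z i ≤ 1)

/-- The objective `cᵀ(x+y) - ε eᵀ z`. -/
def objBPD {n : ℕ} (c : Fin n → ℝ) (ε : ℝ) (x y z : Fin n → ℝ) : ℝ :=
  (∑ i, c i * (x i + y i)) - ε * ∑ i, z i

/-- The set of squared distances `‖x* - y*‖²` between pairs of optimal solutions of BP;
its greatest element is the optimal diameter `diam(BP)`. -/
def diamSet {n m : ℕ} (A : Matrix (Fin m) (Fin n) ℝ) (b : Fin m → ℝ)
    (c : Fin n → ℝ) : Set ℝ :=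
  {r | ∃ x y, OptBP A b c x ∧ OptBP A b c y ∧ r = ∑ i, (x i - y i) ^ 2}

/-- Pairs of BP-feasible points with overlap slack are BPD'-feasible. -/
lemma feas_pair {n m : ℕ} {A : Matrix (Fin m) (Fin n) ℝ} {b : Fin m → ℝ}
    {x y : Fin n → ℝ} (hx : FeasBP A b x) (hy : FeasBP A b y) :
    FeasBPD' A b x y (fun i => x i * y i) := by
  refine ⟨hx.1, hy.1, ?_, hx.2, hy.2, ?_⟩
  · intro i
    rcases hx.1 i with h | h <;> rcases hy.1 i with h' | h' <;> simp [h, h']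
  · intro i
    rcases hx.1 i with h | h <;> rcases hy.1 i with h' | h' <;> simp [h, h'] <;> norm_num

lemma obj_split {n : ℕ} (c : Fin n → ℝ) (ε : ℝ) (x y z : Fin n → ℝ) :
    objBPD c ε x y z = (∑ i, c i * x i) + (∑ i, c i * y i) - ε * ∑ i, z i := by
  unfold objBPD
  rw [← Finset.sum_add_distrib]
  congr 1
  exact Finset.sum_congr rfl fun i _ => by ring

lemma sq_dist_eq {n : ℕ} {x y : Fin n → ℝ} (hx : BinaryVec x) (hy : BinaryVec y) :
    ∑ i, (x i - y i) ^ 2 = (∑ i, (x i)^2) + (∑ i, (y i)^2) - 2 * ∑ i, x i * y i := by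
  rw [two_mul, ← Finset.sum_add_distrib, ← Finset.sum_add_distrib, ← Finset.sum_sub_distrib]
  exact Finset.sum_congr rfl fun i _ => by ring

theorem stmt6 {n m : ℕ} (A : Matrix (Fin m) (Fin n) ℝ) (b : Fin m → ℝ)
    (c : Fin n → ℝ) (hne : ∃ x, FeasBP A b x)
    (k : ℕ) (hk : ∀ x, OptBP A b c x → ∑ i, (x i) ^ 2 = (k : ℝ)) :
    ∃ ε > (0 : ℝ), ∀ x y z, FeasBPD' A b x y z →
      (∀ x' y' z', FeasBPD' A b x' y' z' →
        objBPD c ε x' y' z' ≤ objBPD c ε x y z) →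
      IsGreatest (diamSet A b c) (2 * ((k : ℝ) - ∑ i, z i)) := by
  classical
  -- the feasible set is finite
  have hbin_fin : {x : Fin n → ℝ | BinaryVec x}.Finite := by
    apply Set.Finite.subset
      (Set.finite_range (fun f : Fin n → Bool => fun i => if f i then (1:ℝ) else 0))
    intro x hx
    refine ⟨fun i => if x i = 1 then true else false, ?_⟩
    funext i
    rcases hx i with h | h <;> norm_num [h]
  have hFfin : {x : Fin n → ℝ | FeasBP A b x}.Finite := hbin_fin.subset fun x hx => hx.1
  -- existence of an optimal solution
  obtain ⟨x0, hx0F, hx0max⟩ :=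
    Set.exists_max_image {x : Fin n → ℝ | FeasBP A b x} (fun x => ∑ i, c i * x i) hFfin hne
  have hx0opt : OptBP A b c x0 := ⟨hx0F, fun x' hx' => hx0max x' hx'⟩
  set v : ℝ := ∑ i, c i * x0 i with hv
  -- gap δ
  have hgap : ∃ δ > (0:ℝ), ∀ x, FeasBP A b x → (∑ i, c i * x i) ≠ v →
      ∑ i, c i * x i ≤ v - δ := by
    set S : Set (Fin n → ℝ) := {x | FeasBP A b x ∧ (∑ i, c i * x i) ≠ v} with hS
    rcases S.eq_empty_or_nonempty with hE | hNE
    · exact ⟨1, one_pos, fun x hx hxv => absurd (Set.eq_empty_iff_forall_notMem.1 hE x)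
        (by simp [hS, hx, hxv])⟩
    · obtain ⟨w, hwS, hwmax⟩ := Set.exists_max_image S (fun x => ∑ i, c i * x i)
        (hFfin.subset fun x hx => hx.1) hNE
      have hwlt : ∑ i, c i * w i < v := lt_of_le_of_ne (hx0max w hwS.1) hwS.2
      refine ⟨v - ∑ i, c i * w i, by linarith, fun x hx hxv => ?_⟩
      have := hwmax x ⟨hx, hxv⟩
      linarith
  obtain ⟨δ, hδ, hgap⟩ := hgap
  -- choose ε
  refine ⟨δ / (k + 1), by positivity, fun x y z hfeas hopt => ?_⟩
  set ε : ℝ := δ / (k + 1) with hε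
  have hεpos : 0 < ε := by positivity
  have hεk : ε * k < δ := by
    rw [hε, div_mul_eq_mul_div, div_lt_iff₀ (by positivity)]
    nlinarith [hδ]
  obtain ⟨hxb, hyb, hzb, hxA, hyA, hxyz⟩ := hfeas
  have hxF : FeasBP A b x := ⟨hxb, hxA⟩
  have hyF : FeasBP A b y := ⟨hyb, hyA⟩
  -- sum of binary vector is nonneg, ∑ x0 = k
  have hsum_x0 : ∑ i, x0 i = (k : ℝ) := by
    rw [← hk x0 hx0opt]
    exact Finset.sum_congr rfl fun i _ => by rcases hx0F.1 i with h | h <;> simp [h]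
  have hz_nonneg : (0:ℝ) ≤ ∑ i, z i :=
    Finset.sum_nonneg fun i _ => by rcases hzb i with h | h <;> simp [h]
  -- lower bound on the optimum objective
  have hfeas0 : FeasBPD' A b x0 x0 (fun i => x0 i * x0 i) := feas_pair hx0F hx0F
  have hzz : ∑ i, x0 i * x0 i = (k:ℝ) := by
    rw [← hsum_x0]
    exact Finset.sum_congr rfl fun i _ => by rcases hx0F.1 i with h | h <;> simp [h]
  have hlow : 2 * v - ε * k ≤ objBPD c ε x y z := by
    have := hopt x0 x0 _ hfeas0
    rw [obj_split, hzz] at this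
    rw [← hv] at this
    linarith [this]
  -- both x and y are optimal
  have hxv : ∑ i, c i * x i = v := by
    by_contra hxe
    have h1 : ∑ i, c i * x i ≤ v - δ := hgap x hxF hxe
    have h2 : ∑ i, c i * y i ≤ v := hx0max y hyF
    have := hlow
    rw [obj_split] at this
    nlinarith [hz_nonneg, hεpos]
  have hyv : ∑ i, c i * y i = v := by
    by_contra hye
    have h1 : ∑ i, c i * y i ≤ v - δ := hgap y hyF hye
    have h2 : ∑ i, c i * x i ≤ v := hx0max x hxF
    have := hlow
    rw [obj_split] at this
    nlinarith [hz_nonneg, hεpos]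
  have hxopt : OptBP A b c x := ⟨hxF, fun x' hx' => hxv ▸ hx0max x' hx'⟩
  have hyopt : OptBP A b c y := ⟨hyF, fun x' hx' => hyv ▸ hx0max x' hx'⟩
  -- key: the objective of (x,y,z) is 2v - ε ∑ z
  have hobj_xyz : objBPD c ε x y z = 2 * v - ε * ∑ i, z i := by
    rw [obj_split, hxv, hyv]; ring
  -- ∑ z = ∑ x*y
  have hzsum : ∑ i, z i = ∑ i, x i * y i := by
    have hle : ∑ i, z i ≤ ∑ i, x i * y i := by
      have := hopt x y _ (feas_pair hxF hyF)
      rw [obj_split, hobj_xyz, hxv, hyv] at this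
      have h2 : ε * ∑ i, z i ≤ ε * ∑ i, x i * y i := by linarith
      exact le_of_mul_le_mul_left h2 hεpos
    have hge : ∑ i, x i * y i ≤ ∑ i, z i := by
      apply Finset.sum_le_sum
      intro i _
      rcases hxb i with h | h <;> rcases hyb i with h' | h' <;>
        rcases hzb i with h'' | h'' <;>
        · have := hxyz i; rw [h, h', h''] at *; revert this; norm_num
    linarith
  -- general formula: for optimal x', y', dist² = 2k - 2∑x'y'
  have hdist : ∀ x' y', OptBP A b c x' → OptBP A b c y' →
      ∑ i, (x' i - y' i)^2 = 2 * ((k:ℝ) - ∑ i, x' i * y' i) := by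
    intro x' y' hx' hy'
    rw [sq_dist_eq hx'.1.1 hy'.1.1, hk x' hx', hk y' hy']
    ring
  -- upper-bound property: any optimal pair has overlap ≥ ∑ z
  have hub : ∀ x' y', OptBP A b c x' → OptBP A b c y' →
      ∑ i, z i ≤ ∑ i, x' i * y' i := by
    intro x' y' hx' hy'
    have := hopt x' y' _ (feas_pair hx'.1 hy'.1)
    rw [obj_split, hobj_xyz] at this
    have hx'v : ∑ i, c i * x' i = v := le_antisymm (hx0max x' hx'.1) (hx'.2 x0 hx0F)
    have hy'v : ∑ i, c i * y' i = v := le_antisymm (hx0max y' hy'.1) (hy'.2 x0 hx0F)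
    rw [hx'v, hy'v] at this
    have h2 : ε * ∑ i, z i ≤ ε * ∑ i, x' i * y' i := by linarith
    exact le_of_mul_le_mul_left h2 hεpos
  constructor
  · exact ⟨x, y, hxopt, hyopt, by rw [hdist x y hxopt hyopt, hzsum]⟩
  · rintro r ⟨x', y', hx', hy', rfl⟩
    rw [hdist x' y' hx' hy']
    have := hub x' y' hx' hy'
    linarith
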